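/- For all nonnegative integers n and \ell, the Bell numbers satisfy Spivey's formula: B_{n+\ell} = \sum_{j=0}^{\ell} \sum_{k=0}^{n} S(\ell, j) \binom{n}{k} j^{n-k} B_k, where S(\ell,j) are the Stirling numbers of the second kind and B_k = \sum_{j=0}^k S(k,j) are the Bell numbers. -/

import Mathlib

/-- The Stirling numbers of the second kind, via `S(n,k) = S(n-1,k-1) + k * S(n-1,k)`. -/
def stirling2 : ℕ → ℕ → ℕ
  | 0, 0 => 1
  | 0, _ + 1 => 0
  | _ + 1, 0 => 0
  | n + 1, k + 1 => stirling2 n k + (k + 1) * stirling2 n (k + 1)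

/-- The Bell numbers: the sum over k ≤ n of `S(n,k)`. -/
def bell (n : ℕ) : ℕ := ∑ k ∈ Finset.range (n + 1), stirling2 n k

lemma stirling2_eq_zero : ∀ n k, n < k → stirling2 n k = 0
  | 0, _ + 1, _ => rfl
  | n + 1, k + 1, h => by
    rw [stirling2, stirling2_eq_zero n k (by omega), stirling2_eq_zero n (k+1) (by omega)]
    ring

lemma stirling2_succ_succ (n k : ℕ) :
    stirling2 (n+1) (k+1) = stirling2 n k + (k + 1) * stirling2 n (k + 1) := rfl

lemma stirling2_succ_zero (n : ℕ) : stirling2 (n+1) 0 = 0 := rfl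

lemma stirling2_succ_one (n : ℕ) : stirling2 (n+1) 1 = 1 := by
  induction n with
  | zero => rfl
  | succ n ih => rw [stirling2_succ_succ, ih, stirling2_succ_zero]

lemma stirling2_succ_eq (n : ℕ) : ∀ j, stirling2 (n+1) (j+1) =
    ∑ k ∈ Finset.range (n+1), n.choose k * stirling2 k j := by
  induction n with
  | zero => intro j; simp [stirling2_succ_succ, stirling2_eq_zero]
  | succ n ih =>
    intro j
    rw [Finset.sum_range_succ' (fun k => (n+1).choose k * stirling2 k j) (n+1)]
    simp only [Nat.choose_succ_succ, add_mul]
    rw [Finset.sum_add_distrib]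
    simp only [Nat.succ_eq_add_one]
    conv_rhs => rw [add_assoc]
    have h1 : (∑ k ∈ Finset.range (n+1), n.choose (k+1) * stirling2 (k+1) j)
        + (n+1).choose 0 * stirling2 0 j = stirling2 (n+1) (j+1) := by
      rw [show (n+1).choose 0 = n.choose 0 by simp,
        ← Finset.sum_range_succ' (fun k => n.choose k * stirling2 k j) (n+1),
        Finset.sum_range_succ, Nat.choose_eq_zero_of_lt (Nat.lt_succ_self n), ih]
      ring
    rw [h1]
    cases j with
    | zero =>
      simp [stirling2_succ_zero, stirling2_succ_one, stirling2_succ_succ]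
    | succ j =>
      have e : ∑ k ∈ Finset.range (n+1), n.choose k * stirling2 (k+1) (j+1)
          = (∑ k ∈ Finset.range (n+1), n.choose k * stirling2 k j)
            + (j+1) * ∑ k ∈ Finset.range (n+1), n.choose k * stirling2 k (j+1) := by
        rw [Finset.mul_sum, ← Finset.sum_add_distrib]
        refine Finset.sum_congr rfl fun k _ => ?_
        rw [stirling2_succ_succ]
        ring
      rw [e, ← ih, ← ih, stirling2_succ_succ]
      ring

lemma sum_stirling2_eq_bell {k m : ℕ} (h : k ≤ m) :
    ∑ j ∈ Finset.range (m+1), stirling2 k j = bell k := by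
  rw [bell]
  symm
  apply Finset.sum_subset (Finset.range_subset_range.2 (by omega))
  intro x hx hx'
  simp only [Finset.mem_range] at hx hx'
  exact stirling2_eq_zero _ _ (by omega)

lemma bell_succ (n : ℕ) : bell (n+1) = ∑ k ∈ Finset.range (n+1), n.choose k * bell k := by
  rw [bell, Finset.sum_range_succ' (fun j => stirling2 (n+1) j) (n+1)]
  simp only [stirling2_succ_eq, stirling2_succ_zero, add_zero]
  rw [Finset.sum_comm]
  refine Finset.sum_congr rfl fun k hk => ?_
  rw [← Finset.mul_sum, sum_stirling2_eq_bell (by simp only [Finset.mem_range] at hk; omega)]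

lemma choose_pow_sum (n i j : ℕ) (h : i ≤ n) :
    ∑ k ∈ Finset.range (n+1), n.choose k * k.choose i * j ^ (n-k)
      = n.choose i * (j+1) ^ (n-i) := by
  rw [Finset.range_eq_Ico, ← Finset.sum_Ico_consecutive _ (Nat.zero_le i) (by omega)]
  have h0 : ∑ k ∈ Finset.Ico 0 i, n.choose k * k.choose i * j ^ (n-k) = 0 := by
    apply Finset.sum_eq_zero
    intro k hk
    simp only [Finset.mem_Ico] at hk
    rw [Nat.choose_eq_zero_of_lt hk.2]
    ring
  rw [h0, zero_add, Finset.sum_Ico_eq_sum_range]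
  have hN : n + 1 - i = (n - i) + 1 := by omega
  rw [hN]
  have step : ∀ m ∈ Finset.range ((n-i)+1),
      n.choose (i+m) * (i+m).choose i * j ^ (n-(i+m))
        = n.choose i * ((n-i).choose m * j ^ ((n-i)-m)) := by
    intro m hm
    simp only [Finset.mem_range] at hm
    rw [Nat.choose_mul (n := n) (k := i+m) (s := i) (by omega)]
    have : i + m - i = m := by omega
    rw [this]
    have : n - (i + m) = (n - i) - m := by omega
    rw [this, mul_assoc]
  rw [Finset.sum_congr rfl step, ← Finset.mul_sum]
  congr 1
  have := add_pow (1 : ℕ) j (n - i)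
  rw [show (1 : ℕ) + j = j + 1 by omega] at this
  simpa [mul_comm] using this.symm

lemma bell_shift (n j : ℕ) :
    ∑ k ∈ Finset.range (n+1), n.choose k * j ^ (n-k) * bell (k+1)
      = ∑ k ∈ Finset.range (n+1), n.choose k * (j+1) ^ (n-k) * bell k := by
  have step : ∀ k ∈ Finset.range (n+1),
      n.choose k * j ^ (n-k) * bell (k+1)
        = ∑ i ∈ Finset.range (n+1), n.choose k * k.choose i * j ^ (n-k) * bell i := by
    intro k hk
    simp only [Finset.mem_range] at hk
    rw [bell_succ]
    have ext : ∑ i ∈ Finset.range (k+1), k.choose i * bell i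
        = ∑ i ∈ Finset.range (n+1), k.choose i * bell i := by
      apply Finset.sum_subset (Finset.range_subset_range.2 (by omega))
      intro x hx hx'
      simp only [Finset.mem_range] at hx hx'
      rw [Nat.choose_eq_zero_of_lt (by omega)]
      ring
    rw [show n.choose k * j ^ (n-k) * (∑ i ∈ Finset.range (k+1), k.choose i * bell i)
        = n.choose k * j ^ (n-k) * (∑ i ∈ Finset.range (n+1), k.choose i * bell i) by rw [ext],
      Finset.mul_sum]
    exact Finset.sum_congr rfl fun i _ => by ring
  rw [Finset.sum_congr rfl step, Finset.sum_comm]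
  refine Finset.sum_congr rfl fun i hi => ?_
  simp only [Finset.mem_range] at hi
  rw [← Finset.sum_mul, choose_pow_sum n i j (by omega)]

lemma inner_expand (n j : ℕ) :
    ∑ k ∈ Finset.range (n+2), (n+1).choose k * j ^ (n+1-k) * bell k
      = (∑ k ∈ Finset.range (n+1), n.choose k * (j+1) ^ (n-k) * bell k)
        + j * ∑ k ∈ Finset.range (n+1), n.choose k * j ^ (n-k) * bell k := by
  have hA : ∑ k ∈ Finset.range (n+1), n.choose k * j ^ (n+1-k) * bell k
      = j * ∑ k ∈ Finset.range (n+1), n.choose k * j ^ (n-k) * bell k := by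
    rw [Finset.mul_sum]
    refine Finset.sum_congr rfl fun k hk => ?_
    simp only [Finset.mem_range] at hk
    rw [show n+1-k = (n-k)+1 by omega, pow_succ]
    ring
  have e0 := Finset.sum_range_succ' (fun k => n.choose k * j ^ (n+1-k) * bell k) (n+1)
  simp only [Nat.succ_sub_succ, Nat.sub_zero, Nat.choose_zero_right, one_mul] at e0
  have e1 := Finset.sum_range_succ (fun k => n.choose k * j ^ (n+1-k) * bell k) (n+1)
  rw [Nat.choose_eq_zero_of_lt (Nat.lt_succ_self n)] at e1
  simp only [zero_mul, add_zero] at e1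
  rw [Finset.sum_range_succ' (fun k => (n+1).choose k * j ^ (n+1-k) * bell k) (n+1)]
  simp only [Nat.choose_succ_succ, Nat.succ_sub_succ, Nat.sub_zero, Nat.choose_zero_right,
    one_mul, add_mul]
  rw [Finset.sum_add_distrib]
  rw [← bell_shift n j, ← hA, ← e1, e0]
  ring

lemma key (n ℓ : ℕ) :
    ∑ j ∈ Finset.range (ℓ+1), ∑ k ∈ Finset.range (n+2),
        stirling2 ℓ j * (n+1).choose k * j ^ (n+1-k) * bell k
      = ∑ j ∈ Finset.range (ℓ+2), ∑ k ∈ Finset.range (n+1),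
        stirling2 (ℓ+1) j * n.choose k * j ^ (n-k) * bell k := by
  have L : ∀ j, ∑ k ∈ Finset.range (n+2), stirling2 ℓ j * (n+1).choose k * j ^ (n+1-k) * bell k
      = stirling2 ℓ j * ∑ k ∈ Finset.range (n+2), (n+1).choose k * j ^ (n+1-k) * bell k := by
    intro j; rw [Finset.mul_sum]; exact Finset.sum_congr rfl fun k _ => by ring
  have R : ∀ j, ∑ k ∈ Finset.range (n+1), stirling2 (ℓ+1) j * n.choose k * j ^ (n-k) * bell k
      = stirling2 (ℓ+1) j * ∑ k ∈ Finset.range (n+1), n.choose k * j ^ (n-k) * bell k := by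
    intro j; rw [Finset.mul_sum]; exact Finset.sum_congr rfl fun k _ => by ring
  simp only [L, R, inner_expand]
  rw [Finset.sum_range_succ'
    (fun j => stirling2 (ℓ+1) j * ∑ k ∈ Finset.range (n+1), n.choose k * j ^ (n-k) * bell k)
    (ℓ+1)]
  simp only [stirling2_succ_succ, stirling2_succ_zero, zero_mul, add_zero, add_mul, mul_add]
  rw [Finset.sum_add_distrib, Finset.sum_add_distrib]
  congr 1
  have g0 := Finset.sum_range_succ'
    (fun j => j * stirling2 ℓ j * ∑ k ∈ Finset.range (n+1), n.choose k * j ^ (n-k) * bell k)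
    (ℓ+1)
  have g1 := Finset.sum_range_succ
    (fun j => j * stirling2 ℓ j * ∑ k ∈ Finset.range (n+1), n.choose k * j ^ (n-k) * bell k)
    (ℓ+1)
  rw [stirling2_eq_zero ℓ (ℓ+1) (Nat.lt_succ_self ℓ)] at g1
  simp only [mul_zero, zero_mul, add_zero] at g0 g1
  have g2 : ∑ j ∈ Finset.range (ℓ+1),
        (j+1) * stirling2 ℓ (j+1) * ∑ k ∈ Finset.range (n+1), n.choose k * (j+1) ^ (n-k) * bell k
      = ∑ j ∈ Finset.range (ℓ+1),
        j * stirling2 ℓ j * ∑ k ∈ Finset.range (n+1), n.choose k * j ^ (n-k) * bell k := by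
    rw [← g1, g0]
  rw [show (∑ j ∈ Finset.range (ℓ+1), stirling2 ℓ j *
        (j * ∑ k ∈ Finset.range (n+1), n.choose k * j ^ (n-k) * bell k))
      = ∑ j ∈ Finset.range (ℓ+1),
        j * stirling2 ℓ j * ∑ k ∈ Finset.range (n+1), n.choose k * j ^ (n-k) * bell k from
    Finset.sum_congr rfl fun j _ => by ring, ← g2]
  exact Finset.sum_congr rfl fun j _ => by ring

theorem bell_spivey (n ℓ : ℕ) :
    bell (n + ℓ) =
      ∑ j ∈ Finset.range (ℓ + 1), ∑ k ∈ Finset.range (n + 1),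
        stirling2 ℓ j * n.choose k * j ^ (n - k) * bell k := by
  induction n generalizing ℓ with
  | zero => simp [bell, Finset.sum_range_one, show stirling2 0 0 = 1 from rfl]
  | succ n ih =>
    rw [show n + 1 + ℓ = n + (ℓ + 1) by omega, ih (ℓ+1), ← key]
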